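/- Let c < d < 1 and φ continuous on [c,d]. Then the function t ↦ ∫_c^d (φ(γ)/Γ(2-γ)) t^{1-γ} dγ is absolutely continuous on [0,a], with derivative t ↦ ∫_c^d (φ(γ)(1-γ)/Γ(2-γ)) t^{-γ} dγ which is locally integrable on [0,a]. -/

import Mathlib

open MeasureTheory Set
open scoped ENNReal NNReal

/-- Absolute continuity of a function on `[A,B]` in the standard ε–δ sense. -/
def AbsolutelyContinuousOnI (f : ℝ → ℝ) (A B : ℝ) : Prop :=
  ∀ ε > (0:ℝ), ∃ δ > (0:ℝ), ∀ (n : ℕ) (s t : Fin n → ℝ),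
    (∀ i, A ≤ s i ∧ s i ≤ t i ∧ t i ≤ B) →
    (∀ i j, i ≠ j → Disjoint (Set.Ioo (s i) (t i)) (Set.Ioo (s j) (t j))) →
    (∑ i, (t i - s i)) < δ → (∑ i, |f (t i) - f (s i)|) < ε

lemma aux_AC (a : ℝ) (f B : ℝ → ℝ)
    (hB : IntegrableOn B (Icc 0 a) volume)
    (hf : ∀ t ∈ Icc (0:ℝ) a, f t = ∫ x in (0:ℝ)..t, B x) :
    AbsolutelyContinuousOnI f 0 a := by
  intro ε hε
  set ρ := volume.restrict (Icc (0:ℝ) a) with hρ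
  have htot : (∫⁻ x, ‖B x‖₊ ∂ρ) ≠ ⊤ := hB.2.ne
  obtain ⟨δ', hδ'pos, hδ'⟩ := exists_pos_setLIntegral_lt_of_measure_lt (μ := ρ)
    (f := fun x => (‖B x‖₊ : ℝ≥0∞)) htot (ε := ENNReal.ofReal ε)
    ((ENNReal.ofReal_pos.mpr hε).ne')
  obtain ⟨r, hr0, hrδ⟩ := ENNReal.lt_iff_exists_nnreal_btwn.mp hδ'pos
  refine ⟨(r : ℝ), by exact_mod_cast hr0, ?_⟩
  intro n s t hst hdisj hsum
  -- the union
  set U : Set ℝ := ⋃ i, Ioo (s i) (t i) with hU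
  have hUsub : U ⊆ Icc 0 a := by
    rintro x ⟨_, ⟨i, rfl⟩, hx⟩
    exact ⟨le_trans (hst i).1 hx.1.le, le_trans hx.2.le (hst i).2.2⟩
  have hmeasU : ρ U < δ' := by
    refine lt_of_le_of_lt ?_ hrδ
    calc ρ U ≤ volume U := le_trans (Measure.restrict_le_self _) le_rfl
      _ ≤ ∑ i, volume (Ioo (s i) (t i)) := measure_iUnion_fintype_le _ _
      _ = ∑ i, ENNReal.ofReal (t i - s i) := by simp [Real.volume_Ioo]
      _ = ENNReal.ofReal (∑ i, (t i - s i)) :=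
          (ENNReal.ofReal_sum_of_nonneg (fun i _ => sub_nonneg.2 (hst i).2.1)).symm
      _ ≤ (r : ℝ≥0∞) := by
          rw [← ENNReal.ofReal_coe_nnreal]
          exact ENNReal.ofReal_le_ofReal hsum.le
  have hkey := hδ' U hmeasU
  -- per-interval lintegrals
  set L : Fin n → ℝ≥0∞ := fun i => ∫⁻ x in Ioo (s i) (t i), ‖B x‖₊ ∂ρ with hL
  have hLsum : ∑ i, L i = ∫⁻ x in U, ‖B x‖₊ ∂ρ := by
    rw [hU, lintegral_iUnion (fun i => measurableSet_Ioo)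
      (fun i j hij => (hdisj i j hij)), tsum_fintype]
  have hLfin : ∀ i, L i ≠ ⊤ := by
    intro i
    refine ne_top_of_le_ne_top htot ?_
    exact lintegral_mono' (Measure.restrict_le_self) le_rfl
  -- bound each term
  have hterm : ∀ i, |f (t i) - f (s i)| ≤ (L i).toReal := by
    intro i
    obtain ⟨h0s, hstle, hta⟩ := hst i
    have hs_mem : s i ∈ Icc (0:ℝ) a := ⟨h0s, le_trans hstle hta⟩
    have ht_mem : t i ∈ Icc (0:ℝ) a := ⟨le_trans h0s hstle, hta⟩
    have hint_s : IntervalIntegrable B volume 0 (s i) := by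
      rw [intervalIntegrable_iff_integrableOn_Ioc_of_le h0s]
      exact hB.mono_set (Ioc_subset_Icc_self.trans (Icc_subset_Icc le_rfl hs_mem.2))
    have hint_t : IntervalIntegrable B volume 0 (t i) := by
      rw [intervalIntegrable_iff_integrableOn_Ioc_of_le ht_mem.1]
      exact hB.mono_set (Ioc_subset_Icc_self.trans (Icc_subset_Icc le_rfl ht_mem.2))
    have hdiff : f (t i) - f (s i) = ∫ x in (s i)..(t i), B x := by
      rw [hf _ ht_mem, hf _ hs_mem]
      exact intervalIntegral.integral_interval_sub_left hint_t hint_s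
    rw [hdiff]
    have h1 : (∫ x in (s i)..(t i), B x) = ∫ x in Ioc (s i) (t i), B x := by
      rw [intervalIntegral.integral_of_le hstle]
    have h2 : |∫ x in Ioc (s i) (t i), B x| ≤
        (∫⁻ x in Ioc (s i) (t i), ‖B x‖₊).toReal := by
      simpa [← ofReal_norm_eq_enorm, ← enorm_eq_nnnorm, Real.norm_eq_abs] using
        norm_integral_le_lintegral_norm (μ := volume.restrict (Ioc (s i) (t i))) B
    have h3 : (∫⁻ x in Ioc (s i) (t i), (‖B x‖₊ : ℝ≥0∞)) = L i := by
      have e1 : volume.restrict (Ioc (s i) (t i)) = volume.restrict (Ioo (s i) (t i)) :=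
        (Measure.restrict_congr_set Ioo_ae_eq_Ioc).symm
      have e2 : ρ.restrict (Ioo (s i) (t i)) = volume.restrict (Ioo (s i) (t i)) := by
        rw [hρ, Measure.restrict_restrict measurableSet_Ioo, inter_eq_self_of_subset_left]
        exact fun x hx => ⟨le_trans h0s hx.1.le, le_trans hx.2.le hta⟩
      rw [hL, e1, ← e2]
    rw [h1, ← h3]
    exact h2
  calc (∑ i, |f (t i) - f (s i)|) ≤ ∑ i, (L i).toReal := Finset.sum_le_sum fun i _ => hterm i
    _ = (∑ i, L i).toReal := (ENNReal.toReal_sum fun i _ => hLfin i).symm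
    _ < ε := by
        rw [hLsum]
        exact ENNReal.toReal_lt_of_lt_ofReal hkey


lemma aux_main (a c d : ℝ) (ha : 0 < a) (hcd : c < d) (hd : d < 1)
    (ψ : ℝ → ℝ) (hψ : Continuous ψ) :
    Integrable (fun x => ∫ γ in Ioc c d, (ψ γ * (1 - γ) / Real.Gamma (2 - γ)) * x ^ (-γ))
      (volume.restrict (Ioc 0 a)) ∧
    ∀ t ∈ Icc (0:ℝ) a,
      (∫ γ in Ioc c d, (ψ γ / Real.Gamma (2 - γ)) * t ^ (1 - γ)) =
        ∫ x in (0:ℝ)..t, ∫ γ in Ioc c d, (ψ γ * (1 - γ) / Real.Gamma (2 - γ)) * x ^ (-γ) := by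
  set G : ℝ → ℝ := fun γ => ψ γ * (1 - γ) / Real.Gamma (2 - γ) with hG
  set F : ℝ × ℝ → ℝ := fun p => G p.2 * p.1 ^ (-p.2) with hF
  have hIccIio : Icc c d ⊆ Iio (1:ℝ) := fun γ hγ => lt_of_le_of_lt hγ.2 hd
  have hIocIio : Ioc c d ⊆ Iio (1:ℝ) := Ioc_subset_Icc_self.trans hIccIio
  -- continuity of G on Iio 1
  have hΓcont : ContinuousOn (fun γ : ℝ => Real.Gamma (2 - γ)) (Iio 1) := by
    intro γ hγ
    have h2γ : (0:ℝ) < 2 - γ := by simp at hγ; linarith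
    have : ContinuousAt (fun γ : ℝ => Real.Gamma (2 - γ)) γ := by
      have hg : ContinuousAt Real.Gamma (2 - γ) := by
        refine (Real.differentiableAt_Gamma ?_).continuousAt
        intro m
        have : (0:ℝ) ≤ m := Nat.cast_nonneg m
        intro h; rw [h] at h2γ; linarith
      exact hg.comp ((continuous_const.sub continuous_id).continuousAt)
    exact this.continuousWithinAt
  have hΓne : ∀ γ : ℝ, γ < 1 → Real.Gamma (2 - γ) ≠ 0 := fun γ hγ =>
    (Real.Gamma_pos_of_pos (by linarith)).ne'
  have hGcont : ContinuousOn G (Iio 1) := by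
    refine ContinuousOn.div ?_ hΓcont (fun γ hγ => hΓne γ hγ)
    exact (hψ.mul (continuous_const.sub continuous_id)).continuousOn
  -- bound on G
  obtain ⟨M, hM⟩ := (isCompact_Icc (a := c) (b := d)).exists_bound_of_continuousOn
    (hGcont.mono hIccIio)
  have hM0 : 0 ≤ M := le_trans (norm_nonneg _) (hM c ⟨le_rfl, hcd.le⟩)
  -- continuity of F on (Ioi 0) ×ˢ (Iio 1)
  have hFcont : ContinuousOn F ((Ioi 0) ×ˢ (Iio 1)) := by
    refine ContinuousOn.mul ?_ ?_
    · exact hGcont.comp continuous_snd.continuousOn (fun p hp => hp.2)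
    · intro p hp
      have h := Real.continuousAt_rpow (p.1, -p.2) (Or.inl (ne_of_gt hp.1))
      have hc : ContinuousAt (fun q : ℝ × ℝ => (q.1, -q.2)) p :=
        (continuous_fst.prodMk continuous_snd.neg).continuousAt
      have hca : ContinuousAt ((fun q : ℝ × ℝ => q.1 ^ q.2) ∘ (fun q : ℝ × ℝ => (q.1, -q.2))) p :=
        ContinuousAt.comp (x := p) (f := fun q : ℝ × ℝ => (q.1, -q.2)) h hc
      exact hca.continuousWithinAt
  -- measures
  set μa := volume.restrict (Ioc (0:ℝ) a) with hμa
  set ν := volume.restrict (Ioc c d) with hν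
  haveI : IsFiniteMeasure ν := by
    constructor
    rw [hν, Measure.restrict_apply_univ, Real.volume_Ioc]
    exact ENNReal.ofReal_lt_top
  have hprod : μa.prod ν = (volume.prod volume).restrict ((Ioc 0 a) ×ˢ (Ioc c d)) := by
    rw [hμa, hν, Measure.prod_restrict]
  -- the dominating function
  set f₀ : ℝ → ℝ := fun x => M * (x ^ (-c) + x ^ (-d)) with hf₀
  have hf₀int : IntegrableOn f₀ (Ioc 0 a) volume := by
    have h1 : IntervalIntegrable (fun x : ℝ => x ^ (-c)) volume 0 a :=
      intervalIntegral.intervalIntegrable_rpow' (by linarith)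
    have h2 : IntervalIntegrable (fun x : ℝ => x ^ (-d)) volume 0 a :=
      intervalIntegral.intervalIntegrable_rpow' (by linarith)
    have := ((h1.add h2).smul M)
    rw [intervalIntegrable_iff_integrableOn_Ioc_of_le ha.le] at this
    simpa [hf₀, Pi.smul_def, smul_eq_mul] using this
  have hf₀cont : ContinuousOn f₀ (Ioi 0) := by
    refine continuousOn_const.mul (ContinuousOn.add ?_ ?_) <;>
      exact continuousOn_id.rpow_const (fun x hx => Or.inl (ne_of_gt hx))
  -- a.e. strong measurability of F w.r.t. μa.prod ν
  have hFaesm : AEStronglyMeasurable F (μa.prod ν) := by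
    rw [hprod]
    have h1 : AEMeasurable F ((volume.prod volume).restrict ((Ioi 0) ×ˢ (Iio 1))) :=
      hFcont.aemeasurable (measurableSet_Ioi.prod measurableSet_Iio)
    have h2 : (volume.prod volume).restrict ((Ioc 0 a) ×ˢ (Ioc c d)) ≤
        (volume.prod volume).restrict ((Ioi 0) ×ˢ (Iio 1)) :=
      Measure.restrict_mono (prod_mono Ioc_subset_Ioi_self hIocIio) le_rfl
    exact (h1.mono_measure h2).aestronglyMeasurable
  -- pointwise bound
  have hbound : ∀ p : ℝ × ℝ, p ∈ (Ioc 0 a) ×ˢ (Ioc c d) → ‖F p‖ ≤ f₀ p.1 := by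
    rintro ⟨x, γ⟩ ⟨hx, hγ⟩
    have hx0 : (0:ℝ) < x := hx.1
    have hrpow_nonneg : (0:ℝ) ≤ x ^ (-γ) := Real.rpow_nonneg hx0.le _
    have hGle : |G γ| ≤ M := by
      simpa [Real.norm_eq_abs] using hM γ ⟨hγ.1.le, hγ.2⟩
    have hxb : x ^ (-γ) ≤ x ^ (-c) + x ^ (-d) := by
      rcases le_total x 1 with hx1 | hx1
      · have : x ^ (-γ) ≤ x ^ (-d) :=
          Real.rpow_le_rpow_of_exponent_ge hx0 hx1 (neg_le_neg hγ.2)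
        have h' : (0:ℝ) ≤ x ^ (-c) := Real.rpow_nonneg hx0.le _
        linarith
      · have : x ^ (-γ) ≤ x ^ (-c) :=
          Real.rpow_le_rpow_of_exponent_le hx1 (neg_le_neg hγ.1.le)
        have h' : (0:ℝ) ≤ x ^ (-d) := Real.rpow_nonneg hx0.le _
        linarith
    calc ‖F (x, γ)‖ = |G γ| * (x ^ (-γ)) := by
          rw [hF]; simp [Real.norm_eq_abs, abs_mul, abs_of_nonneg hrpow_nonneg]
      _ ≤ M * (x ^ (-c) + x ^ (-d)) := by
          apply mul_le_mul hGle hxb hrpow_nonneg hM0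
  -- integrability of the dominating function on the product
  have hdom : Integrable (fun p : ℝ × ℝ => f₀ p.1) (μa.prod ν) := by
    have hf₀aesm : AEStronglyMeasurable (fun p : ℝ × ℝ => f₀ p.1) (μa.prod ν) := by
      rw [hprod]
      have h1 : AEMeasurable (fun p : ℝ × ℝ => f₀ p.1)
          ((volume.prod volume).restrict ((Ioi 0) ×ˢ (Iio 1))) :=
        (hf₀cont.comp continuous_fst.continuousOn (fun p hp => hp.1)).aemeasurable
          (measurableSet_Ioi.prod measurableSet_Iio)
      have h2 : (volume.prod volume).restrict ((Ioc 0 a) ×ˢ (Ioc c d)) ≤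
          (volume.prod volume).restrict ((Ioi 0) ×ˢ (Iio 1)) :=
        Measure.restrict_mono (prod_mono Ioc_subset_Ioi_self hIocIio) le_rfl
      exact (h1.mono_measure h2).aestronglyMeasurable
    rw [integrable_prod_iff hf₀aesm]
    constructor
    · exact Filter.Eventually.of_forall fun x => by simpa using integrable_const (f₀ x)
    · simp only [integral_const, smul_eq_mul]
      exact (hf₀int.norm.const_mul _)
  -- integrability of F on the product
  have hFint : Integrable F (μa.prod ν) := by
    refine Integrable.mono' hdom hFaesm ?_
    rw [hprod]
    filter_upwards [ae_restrict_mem (measurableSet_Ioc.prod measurableSet_Ioc)] with p hp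
    exact hbound p hp
  constructor
  · -- Part 1: integrability of B
    have hBint : Integrable (fun x => ∫ γ, F (x, γ) ∂ν) μa := hFint.integral_prod_left
    exact hBint
  · -- Part 2: FTC identity
    intro t ⟨ht0, hta⟩
    have hνeq : ∀ x : ℝ, (∫ γ in Ioc c d, G γ * x ^ (-γ)) = ∫ γ, F (x, γ) ∂ν := fun x => rfl
    -- restrict F to Ioc 0 t
    have hFint' : Integrable F ((volume.restrict (Ioc 0 t)).prod ν) := by
      refine hFint.mono_measure ?_
      rw [hprod, Measure.prod_restrict]
      exact Measure.restrict_mono (prod_mono (Ioc_subset_Ioc le_rfl hta) subset_rfl) le_rfl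
    have swap :
        (∫ x in Ioc (0:ℝ) t, ∫ γ, F (x, γ) ∂ν) = ∫ γ in Ioc c d, ∫ x in Ioc (0:ℝ) t, F (x, γ) := by
      exact MeasureTheory.integral_integral_swap hFint'
    have inner : ∀ γ ∈ Ioc c d,
        (∫ x in Ioc (0:ℝ) t, F (x, γ)) = (ψ γ / Real.Gamma (2 - γ)) * t ^ (1 - γ) := by
      intro γ hγ
      have hγ1 : γ < 1 := lt_of_le_of_lt hγ.2 hd
      have h1γ : (0:ℝ) < 1 - γ := by linarith
      have hrint : (∫ x in Ioc (0:ℝ) t, x ^ (-γ)) = t ^ (1 - γ) / (1 - γ) := by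
        rw [← intervalIntegral.integral_of_le ht0]
        rw [integral_rpow (Or.inl (by linarith))]
        rw [Real.zero_rpow (by linarith)]
        ring_nf
      have : (∫ x in Ioc (0:ℝ) t, F (x, γ)) = G γ * ∫ x in Ioc (0:ℝ) t, x ^ (-γ) := by
        simp only [hF]
        exact integral_const_mul _ _
      have hΓ := hΓne γ hγ1
      have h1γne : (1 - γ) ≠ 0 := ne_of_gt h1γ
      rw [this, hrint, hG]
      field_simp
    calc (∫ γ in Ioc c d, (ψ γ / Real.Gamma (2 - γ)) * t ^ (1 - γ))
        = ∫ γ in Ioc c d, ∫ x in Ioc (0:ℝ) t, F (x, γ) :=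
          (setIntegral_congr_fun (μ := volume) measurableSet_Ioc
            (fun γ hγ => (inner γ hγ))).symm
      _ = ∫ x in Ioc (0:ℝ) t, ∫ γ, F (x, γ) ∂ν := swap.symm
      _ = ∫ x in (0:ℝ)..t, ∫ γ in Ioc c d, (ψ γ * (1 - γ) / Real.Gamma (2 - γ)) * x ^ (-γ) := by
          rw [intervalIntegral.integral_of_le ht0]

/-- for `c < d < 1` and `φ` continuous on `[c,d]`, the function
`A(t) = ∫_c^d (φ(γ)/Γ(2-γ)) t^{1-γ} dγ` is absolutely continuous on `[0,a]`,
with derivative `B(t) = ∫_c^d (φ(γ)(1-γ)/Γ(2-γ)) t^{-γ} dγ` locally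
integrable on `[0,a]`. -/
theorem weight_absolutely_continuous
    (a c d : ℝ) (ha : 0 < a) (hcd : c < d) (hd : d < 1)
    (φ : ℝ → ℝ) (hφ : ContinuousOn φ (Set.Icc c d)) :
    IntegrableOn
      (fun t : ℝ => ∫ γ in c..d, (φ γ * (1 - γ) / Real.Gamma (2 - γ)) * t ^ (-γ))
      (Set.Icc 0 a) volume ∧
    AbsolutelyContinuousOnI
      (fun t : ℝ => ∫ γ in c..d, (φ γ / Real.Gamma (2 - γ)) * t ^ (1 - γ)) 0 a ∧
    (∀ t ∈ Set.Icc (0:ℝ) a,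
      (∫ γ in c..d, (φ γ / Real.Gamma (2 - γ)) * t ^ (1 - γ)) =
        (∫ γ in c..d, (φ γ / Real.Gamma (2 - γ)) * (0:ℝ) ^ (1 - γ)) +
          ∫ x in (0:ℝ)..t,
            ∫ γ in c..d, (φ γ * (1 - γ) / Real.Gamma (2 - γ)) * x ^ (-γ)) := by
  set ψ : ℝ → ℝ := IccExtend hcd.le ((Icc c d).restrict φ) with hψdef
  have hψcont : Continuous ψ := (continuousOn_iff_continuous_restrict.mp hφ).Icc_extend'
  have hψeq : ∀ γ ∈ Icc c d, ψ γ = φ γ := fun γ hγ => by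
    rw [hψdef, IccExtend_of_mem hcd.le _ hγ]; rfl
  obtain ⟨hBint, hkey⟩ := aux_main a c d ha hcd hd ψ hψcont
  have hAeq : ∀ t : ℝ, (∫ γ in c..d, (φ γ / Real.Gamma (2 - γ)) * t ^ (1 - γ)) =
      ∫ γ in Ioc c d, (ψ γ / Real.Gamma (2 - γ)) * t ^ (1 - γ) := by
    intro t
    rw [intervalIntegral.integral_of_le hcd.le]
    refine setIntegral_congr_fun measurableSet_Ioc (fun γ hγ => ?_)
    rw [hψeq γ (Ioc_subset_Icc_self hγ)]
  have hBeq : ∀ x : ℝ, (∫ γ in c..d, (φ γ * (1 - γ) / Real.Gamma (2 - γ)) * x ^ (-γ)) =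
      ∫ γ in Ioc c d, (ψ γ * (1 - γ) / Real.Gamma (2 - γ)) * x ^ (-γ) := by
    intro x
    rw [intervalIntegral.integral_of_le hcd.le]
    refine setIntegral_congr_fun measurableSet_Ioc (fun γ hγ => ?_)
    rw [hψeq γ (Ioc_subset_Icc_self hγ)]
  have hA0 : (∫ γ in Ioc c d, (ψ γ / Real.Gamma (2 - γ)) * (0:ℝ) ^ (1 - γ)) = 0 := by
    have : ∀ γ ∈ Ioc c d, (ψ γ / Real.Gamma (2 - γ)) * (0:ℝ) ^ (1 - γ) = 0 := by
      intro γ hγ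
      have hγ1 : γ < 1 := lt_of_le_of_lt hγ.2 hd
      rw [Real.zero_rpow (by intro h; rw [sub_eq_zero] at h; exact absurd h.symm (ne_of_lt hγ1)),
        mul_zero]
    rw [setIntegral_congr_fun measurableSet_Ioc this, integral_zero]
  have hBIcc : IntegrableOn
      (fun t : ℝ => ∫ γ in c..d, (φ γ * (1 - γ) / Real.Gamma (2 - γ)) * t ^ (-γ))
      (Set.Icc 0 a) volume := by
    have hfun : (fun t : ℝ => ∫ γ in c..d, (φ γ * (1 - γ) / Real.Gamma (2 - γ)) * t ^ (-γ)) =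
        fun t : ℝ => ∫ γ in Ioc c d, (ψ γ * (1 - γ) / Real.Gamma (2 - γ)) * t ^ (-γ) :=
      funext hBeq
    rw [hfun]
    exact (integrableOn_Icc_iff_integrableOn_Ioc).mpr hBint
  refine ⟨hBIcc, ?_, ?_⟩
  · have hfunA : (fun t : ℝ => ∫ γ in c..d, (φ γ / Real.Gamma (2 - γ)) * t ^ (1 - γ)) =
        fun t : ℝ => ∫ γ in Ioc c d, (ψ γ / Real.Gamma (2 - γ)) * t ^ (1 - γ) :=
      funext hAeq
    rw [hfunA]
    refine aux_AC a _ (fun t : ℝ => ∫ γ in c..d, (φ γ * (1 - γ) / Real.Gamma (2 - γ)) * t ^ (-γ))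
      hBIcc ?_
    intro t ht
    rw [hkey t ht]
    refine (intervalIntegral.integral_congr fun x _ => ?_).symm
    exact hBeq x
  · intro t ht
    rw [hAeq t, hAeq 0, hA0, hkey t ht, zero_add]
    refine intervalIntegral.integral_congr fun x _ => ?_
    exact (hBeq x).symm
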